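/- Let n ≥ 2 and let the symmetric group S_n act on ℤ^n (functions Fin n → ℤ) by permuting coordinates, and let L = {v : Fin n → ℤ | ∑_i v i = 0} be the sum-zero lattice. If P is a subgroup of L stable under every coordinate permutation, then either P = 0 or P has finite index in L. -/

import Mathlib

/-- The sum-zero lattice `L ⊆ ℤ^n`. -/
def sumZeroZ (n : ℕ) : AddSubgroup (Fin n → ℤ) where
  carrier := {v | ∑ i, v i = 0}
  add_mem' := by
    intro a b ha hb
    simp only [Set.mem_setOf_eq, Pi.add_apply, Finset.sum_add_distrib] at *
    simp [ha, hb]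
  zero_mem' := by simp
  neg_mem' := by
    intro v hv
    simp only [Set.mem_setOf_eq, Pi.neg_apply, Finset.sum_neg_distrib] at *
    simp [hv]

lemma sumZeroZ_mem {n : ℕ} {v : Fin n → ℤ} : v ∈ sumZeroZ n ↔ ∑ i, v i = 0 := Iff.rfl

/-- a permutation sending `i ↦ k`, `j ↦ l`, given `i ≠ j`, `k ≠ l`. -/
lemma exists_perm_two {α : Type*} [DecidableEq α] {i j k l : α} (hij : i ≠ j) (hkl : k ≠ l) :
    ∃ σ : Equiv.Perm α, σ i = k ∧ σ j = l := by
  set σ₁ := Equiv.swap i k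
  have hj' : σ₁ j ≠ k := by
    intro h
    have : σ₁ j = σ₁ i := by rw [h, Equiv.swap_apply_left]
    exact hij (σ₁.injective this).symm
  refine ⟨σ₁.trans (Equiv.swap (σ₁ j) l), ?_, ?_⟩
  · simp only [Equiv.trans_apply, Equiv.swap_apply_left, σ₁]
    rw [Equiv.swap_apply_of_ne_of_ne hj'.symm hkl]
  · simp [Equiv.trans_apply, Equiv.swap_apply_left]

/-- For `n ≥ 2`, any subgroup of the sum-zero lattice `L ⊆ ℤ^n` stable under all
coordinate permutations is either trivial or of finite index in `L`. -/
theorem perm_stable_subgroup_trivial_or_finite_index (n : ℕ) (hn : 2 ≤ n)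
    (P : AddSubgroup (Fin n → ℤ))
    (hP_le : P ≤ sumZeroZ n)
    (hP_stable : ∀ σ : Equiv.Perm (Fin n), ∀ v ∈ P, (fun i => v (σ⁻¹ i)) ∈ P) :
    P = ⊥ ∨ (P.addSubgroupOf (sumZeroZ n)).index ≠ 0 := by
  rcases eq_or_ne P ⊥ with hbot | hbot
  · exact Or.inl hbot
  right
  -- get a nonzero element
  obtain ⟨v, hvP, hv0⟩ : ∃ v ∈ P, v ≠ 0 := by
    by_contra h
    push_neg at h
    exact hbot (AddSubgroup.eq_bot_iff_forall P |>.mpr h)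
  -- get two distinct coordinates with distinct values
  obtain ⟨i, j, hij, hvij⟩ : ∃ i j : Fin n, i ≠ j ∧ v i ≠ v j := by
    by_contra h
    push_neg at h
    have hconst : ∀ i j : Fin n, v i = v j := by
      intro i j
      rcases eq_or_ne i j with rfl | hne
      · rfl
      · exact h i j hne
    have hsum : ∑ m, v m = 0 := hP_le hvP
    have : ∀ m, v m = 0 := by
      intro m
      have : (n : ℤ) * v m = 0 := by
        rw [← hsum]
        rw [Finset.sum_congr rfl (fun x _ => hconst x m)]
        simp [mul_comm]
      have hn0 : (n : ℤ) ≠ 0 := by positivity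
      exact (mul_eq_zero.mp this).resolve_left hn0
    exact hv0 (funext this)
  set c : ℤ := v i - v j with hc
  have hc0 : c ≠ 0 := sub_ne_zero.mpr hvij
  -- base element c • (e_i - e_j) ∈ P
  have hbase : (c • (Pi.single i (1:ℤ) - Pi.single j 1)) ∈ P := by
    have hsw := hP_stable (Equiv.swap i j) v hvP
    have hmem := P.sub_mem hvP hsw
    have heq : v - (fun m => v ((Equiv.swap i j)⁻¹ m)) = c • (Pi.single i (1:ℤ) - Pi.single j 1) := by
      funext m
      simp only [Pi.sub_apply, Pi.smul_apply, smul_eq_mul, Equiv.swap_inv]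
      rcases eq_or_ne m i with rfl | hmi
      · rw [Equiv.swap_apply_left]
        simp [Pi.single_apply, hij, hc]
      · rcases eq_or_ne m j with rfl | hmj
        · rw [Equiv.swap_apply_right]
          simp [Pi.single_apply, hij.symm, hc]
        · rw [Equiv.swap_apply_of_ne_of_ne hmi hmj]
          simp [Pi.single_apply, hmi, hmj]
    rwa [heq] at hmem
  -- all c • (e_k - e_l) ∈ P
  have hall : ∀ k l : Fin n, c • (Pi.single k (1:ℤ) - Pi.single l 1) ∈ P := by
    intro k l
    rcases eq_or_ne k l with rfl | hkl
    · simpa using P.zero_mem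
    obtain ⟨σ, hσi, hσj⟩ := exists_perm_two hij hkl
    have hmem := hP_stable σ (c • (Pi.single i (1:ℤ) - Pi.single j 1)) hbase
    have heq : (fun m => (c • (Pi.single i (1:ℤ) - Pi.single j 1) : Fin n → ℤ) (σ⁻¹ m))
        = c • (Pi.single k (1:ℤ) - Pi.single l 1) := by
      funext m
      simp only [Pi.smul_apply, Pi.sub_apply, smul_eq_mul]
      have h1 : σ⁻¹ m = i ↔ m = k := by
        rw [← hσi]; exact ⟨fun h => by rw [← h]; simp,
          fun h => by rw [h]; simp⟩
      have h2 : σ⁻¹ m = j ↔ m = l := by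
        rw [← hσj]; exact ⟨fun h => by rw [← h]; simp,
          fun h => by rw [h]; simp⟩
      simp only [Pi.single_apply, h1, h2]
    rwa [heq] at hmem
  -- c • u ∈ P for every u in the lattice
  have hkey : ∀ u ∈ sumZeroZ n, c • u ∈ P := by
    intro u hu
    have hne : Nonempty (Fin n) := ⟨⟨0, by omega⟩⟩
    obtain ⟨i0⟩ := hne
    have hrepr : c • u = ∑ k, u k • (c • (Pi.single k (1:ℤ) - Pi.single i0 1) : Fin n → ℤ) := by
      have : ∑ k, u k • (c • (Pi.single k (1:ℤ) - Pi.single i0 1) : Fin n → ℤ)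
          = c • (∑ k, u k • (Pi.single k (1:ℤ) - Pi.single i0 1)) := by
        rw [Finset.smul_sum]
        exact Finset.sum_congr rfl fun k _ => smul_comm _ _ _
      rw [this]
      congr 1
      have hsplit : ∑ k, u k • (Pi.single k (1:ℤ) - Pi.single i0 1)
          = (∑ k, u k • Pi.single k (1:ℤ)) - (∑ k, u k) • Pi.single i0 (1:ℤ) := by
        rw [Finset.sum_smul]
        rw [← Finset.sum_sub_distrib]
        exact Finset.sum_congr rfl fun k _ => smul_sub _ _ _
      rw [hsplit, sumZeroZ_mem.mp hu, zero_smul, sub_zero]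
      have : ∑ k, u k • Pi.single k (1:ℤ) = ∑ k, Pi.single k (u k) := by
        refine Finset.sum_congr rfl fun k _ => ?_
        funext m
        simp [Pi.single_apply, mul_comm]
      rw [this, Finset.univ_sum_single]
    rw [hrepr]
    exact P.sum_mem fun k _ => P.zsmul_mem (hall k i0) _
  -- the mod-c map on the lattice
  set m : ℕ := c.natAbs with hm
  have hm0 : m ≠ 0 := Int.natAbs_ne_zero.mpr hc0
  haveI : NeZero m := ⟨hm0⟩
  let φ : (sumZeroZ n) →+ (Fin n → ZMod m) :=
    { toFun := fun v => fun k => ((v : Fin n → ℤ) k : ZMod m)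
      map_zero' := by funext k; simp
      map_add' := by intro a b; funext k; push_cast; simp }
  have hker : φ.ker ≤ P.addSubgroupOf (sumZeroZ n) := by
    intro ⟨w, hw⟩ hwker
    have hdvd : ∀ k, c ∣ w k := by
      intro k
      have : ((w k : ℤ) : ZMod m) = 0 := congrFun (hwker) k
      rw [ZMod.intCast_zmod_eq_zero_iff_dvd] at this
      rw [hm] at this
      exact Int.natAbs_dvd.mp this
    set u : Fin n → ℤ := fun k => w k / c with hu
    have hwu : w = c • u := by
      funext k
      simp only [Pi.smul_apply, smul_eq_mul, hu]
      exact (Int.mul_ediv_cancel' (hdvd k)).symm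
    have huL : u ∈ sumZeroZ n := by
      rw [sumZeroZ_mem]
      have : c * ∑ k, u k = 0 := by
        rw [Finset.mul_sum]
        have : ∑ k, c * u k = ∑ k, w k := by
          refine Finset.sum_congr rfl fun k _ => ?_
          rw [hwu]; rfl
        rw [this]
        exact sumZeroZ_mem.mp hw
      exact (mul_eq_zero.mp this).resolve_left hc0
    show w ∈ P
    rw [hwu]
    exact hkey u huL
  have hdvd := AddSubgroup.index_dvd_of_le hker
  rw [AddSubgroup.index_ker] at hdvd
  intro h0
  rw [h0] at hdvd
  have : Nat.card φ.range ≠ 0 := Nat.card_pos.ne'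
  exact this (Nat.eq_zero_of_zero_dvd hdvd)
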